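/- Let $F(p,q) = (4p^3 - 2qp,\; q,\; 3p^4 - qp^2)$. If $F(p,q) = F(p',q')$ with $(p,q) \neq (p',q')$, then $q' = q$, $p' = -p$, $p \neq 0$, and $q = 2p^2$. Consequently the self-intersection set of the swallowtail surface is exactly $\{(0, q, q^2/4) : q > 0\}$, and $F(p,q)=(0,0,0)$ only for $(p,q)=(0,0)$. -/
import Mathlib

/-- The standard swallowtail (`A₃` caustic) parameterization. -/
noncomputable def swallowtail : ℝ × ℝ → (Fin 3 → ℝ) :=
  fun pq => ![4 * pq.1 ^ 3 - 2 * pq.2 * pq.1, pq.2, 3 * pq.1 ^ 4 - pq.2 * pq.1 ^ 2]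

lemma swallowtail_eq_iff (p q p' q' : ℝ) :
    swallowtail (p, q) = swallowtail (p', q') ↔
      4 * p ^ 3 - 2 * q * p = 4 * p' ^ 3 - 2 * q' * p' ∧ q = q' ∧
      3 * p ^ 4 - q * p ^ 2 = 3 * p' ^ 4 - q' * p' ^ 2 := by
  simp [swallowtail, funext_iff, Fin.forall_fin_succ]

lemma key (p q p' : ℝ) (h1 : 4 * p ^ 3 - 2 * q * p = 4 * p' ^ 3 - 2 * q * p')
    (h2 : 3 * p ^ 4 - q * p ^ 2 = 3 * p' ^ 4 - q * p' ^ 2) (hne : p ≠ p') :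
    p' = -p ∧ p ≠ 0 ∧ q = 2 * p ^ 2 := by
  have hd : p - p' ≠ 0 := sub_ne_zero.2 hne
  have e1 : (p - p') * (4 * (p ^ 2 + p * p' + p' ^ 2) - 2 * q) = 0 := by linear_combination h1
  have hq : 4 * (p ^ 2 + p * p' + p' ^ 2) - 2 * q = 0 := by
    rcases mul_eq_zero.1 e1 with h | h
    · exact absurd h hd
    · exact h
  have e2 : (p - p') * ((p + p') * (3 * (p ^ 2 + p' ^ 2) - q)) = 0 := by linear_combination h2
  have e2' : (p + p') * (3 * (p ^ 2 + p' ^ 2) - q) = 0 := by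
    rcases mul_eq_zero.1 e2 with h | h
    · exact absurd h hd
    · exact h
  rcases mul_eq_zero.1 e2' with hs | hs
  · have hp' : p' = -p := by linarith
    subst hp'
    have hp : p ≠ 0 := by intro h; apply hne; simp [h]
    refine ⟨rfl, hp, by nlinarith⟩
  · exfalso
    have : (p - p') ^ 2 = 0 := by nlinarith
    exact hd (pow_eq_zero_iff (n := 2) (by norm_num) |>.1 this)

theorem swallowtail_self_intersection :
    (∀ p q p' q' : ℝ, swallowtail (p, q) = swallowtail (p', q') → (p, q) ≠ (p', q') →
      q' = q ∧ p' = -p ∧ p ≠ 0 ∧ q = 2 * p ^ 2) ∧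
    ({v : Fin 3 → ℝ | ∃ a b : ℝ × ℝ, a ≠ b ∧ swallowtail a = v ∧ swallowtail b = v}
      = {v : Fin 3 → ℝ | ∃ q : ℝ, 0 < q ∧ v = ![0, q, q ^ 2 / 4]}) ∧
    (∀ p q : ℝ, swallowtail (p, q) = 0 → p = 0 ∧ q = 0) := by
  have main : ∀ p q p' q' : ℝ, swallowtail (p, q) = swallowtail (p', q') → (p, q) ≠ (p', q') →
      q' = q ∧ p' = -p ∧ p ≠ 0 ∧ q = 2 * p ^ 2 := by
    intro p q p' q' h hne
    rw [swallowtail_eq_iff] at h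
    obtain ⟨h1, hq, h2⟩ := h
    subst hq
    have hpne : p ≠ p' := by intro h; exact hne (by simp [h])
    obtain ⟨ha, hb, hc⟩ := key p q p' h1 h2 hpne
    exact ⟨rfl, ha, hb, hc⟩
  refine ⟨main, ?_, ?_⟩
  · ext v
    simp only [Set.mem_setOf_eq]
    constructor
    · rintro ⟨⟨p, q⟩, ⟨p', q'⟩, hne, hv, hv'⟩
      obtain ⟨hq, hp', hp, hq2⟩ := main p q p' q' (hv.trans hv'.symm) hne
      have hp2 : 0 < p ^ 2 := by positivity
      refine ⟨q, by nlinarith, ?_⟩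
      rw [← hv, swallowtail]
      subst hq2
      ext i
      fin_cases i <;> simp <;> ring
    · rintro ⟨q, hq, rfl⟩
      obtain ⟨p, hppos, hs⟩ : ∃ p : ℝ, 0 < p ∧ p ^ 2 = q / 2 :=
        ⟨Real.sqrt (q / 2), Real.sqrt_pos.2 (by linarith), Real.sq_sqrt (by linarith)⟩
      refine ⟨(p, q), (-p, q), ?_, ?_, ?_⟩
      · intro h
        rw [Prod.mk.injEq] at h
        linarith [h.1]
      all_goals {
        rw [swallowtail]
        ext i
        fin_cases i <;> simp <;> nlinarith [hs] }
  · intro p q h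
    have h' := congrFun h
    have h0 := h' 0
    have h1 := h' 1
    simp [swallowtail] at h0 h1
    subst h1
    constructor
    · have h3 : p ^ 3 = 0 := by linarith
      exact pow_eq_zero_iff (n := 3) (by norm_num) |>.1 h3
    · rfl
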